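/- For finite sets of constants C and D, the semantics of the defined dependency operator satisfies: M,s ⊨ Kv(C,D) iff for all t ∈ S, if V(s,c)=V(t,c) for all c ∈ C, then V(s,d)=V(t,d) for all d ∈ D. Here Kv(C,D) := [c_1]...[c_m](Kv(d_1) ∧ ... ∧ Kv(d_n)) for any enumerations of C and D, and the truth value is independent of the enumerations chosen. -/

import Mathlib

structure PILModel (Cst : Type) where
  S : Type
  D : Type
  S_ne : Nonempty S
  D_ne : Nonempty D
  V : S → Cst → D

inductive Form (Cst : Type) : Type where
  | top  : Form Cst
  | neg  : Form Cst → Form Cst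
  | conj : Form Cst → Form Cst → Form Cst
  | Kv   : Cst → Form Cst
  | box  : Cst → Form Cst → Form Cst

def PILModel.restrict {Cst} (M : PILModel Cst) (s : M.S) (c : Cst) : PILModel Cst where
  S := { t : M.S // M.V s c = M.V t c }
  D := M.D
  S_ne := ⟨⟨s, rfl⟩⟩
  D_ne := M.D_ne
  V := fun t d => M.V t.1 d

def Sat {Cst} : (M : PILModel Cst) → M.S → Form Cst → Prop
  | _, _, .top => True
  | M, s, .neg φ => ¬ Sat M s φ
  | M, s, .conj φ ψ => Sat M s φ ∧ Sat M s ψ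
  | M, s, .Kv c => ∀ t : M.S, M.V s c = M.V t c
  | M, s, .box c φ => Sat (M.restrict s c) ⟨s, rfl⟩ φ

/-- Iterated inspection [c_1]...[c_m]φ along a list. -/
def boxList {Cst : Type} (l : List Cst) (φ : Form Cst) : Form Cst := l.foldr Form.box φ

/-- Conjunction Kv(d_1) ∧ ... ∧ Kv(d_n) along a list. -/
def kvConj {Cst : Type} (l : List Cst) : Form Cst :=
  l.foldr (fun d ψ => Form.conj (Form.Kv d) ψ) Form.top

lemma kvConj_sat {Cst : Type} (M : PILModel Cst) (s : M.S) (lD : List Cst) :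
    Sat M s (kvConj lD) ↔ ∀ t : M.S, ∀ d ∈ lD, M.V s d = M.V t d := by
  induction lD with
  | nil => simp [kvConj, Sat]
  | cons d l ih =>
    simp only [kvConj, List.foldr] at *
    show ((∀ t : M.S, M.V s d = M.V t d) ∧ _) ↔ _
    rw [ih]
    constructor
    · rintro ⟨h1, h2⟩ t d' hd'
      rcases List.mem_cons.1 hd' with rfl | h
      · exact h1 t
      · exact h2 t d' h
    · intro h
      exact ⟨fun t => h t d List.mem_cons_self,
        fun t d' hd' => h t d' (List.mem_cons_of_mem _ hd')⟩

lemma boxList_sat {Cst : Type} (lC lD : List Cst) :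
    ∀ (M : PILModel Cst) (s : M.S),
    Sat M s (boxList lC (kvConj lD)) ↔
      ∀ t : M.S, (∀ c ∈ lC, M.V s c = M.V t c) → ∀ d ∈ lD, M.V s d = M.V t d := by
  induction lC with
  | nil =>
    intro M s
    rw [show boxList [] (kvConj lD) = kvConj lD from rfl, kvConj_sat]
    constructor
    · intro h t _ d hd; exact h t d hd
    · intro h t d hd; exact h t (by simp) d hd
  | cons c l ih =>
    intro M s
    show Sat (M.restrict s c) ⟨s, rfl⟩ (boxList l (kvConj lD)) ↔ _
    refine (ih (M.restrict s c) ⟨s, rfl⟩).trans ?_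
    constructor
    · intro h t ht d hd
      have hc : M.V s c = M.V t c := ht c List.mem_cons_self
      exact h ⟨t, hc⟩ (fun c' hc' => ht c' (List.mem_cons_of_mem _ hc')) d hd
    · intro h t ht d hd
      exact h t.1 (fun c' hc' => by
        rcases List.mem_cons.1 hc' with rfl | hm
        · exact t.2
        · exact ht c' hm) d hd

/-- Semantics of the defined dependency operator Kv(C,D), independent of enumerations. -/
theorem kvDep_semantics {Cst : Type} [DecidableEq Cst] (M : PILModel Cst) (s : M.S)
    (C D : Finset Cst) (lC lD : List Cst) (hC : lC.toFinset = C) (hD : lD.toFinset = D) :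
    Sat M s (boxList lC (kvConj lD)) ↔
      ∀ t : M.S, (∀ c ∈ C, M.V s c = M.V t c) → ∀ d ∈ D, M.V s d = M.V t d := by
  rw [boxList_sat]
  subst hC hD
  simp
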